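/- arXiv:1304.5602 — 3 statements merged into one kernel-verified Lean document; each statement's English description precedes it below -/
import Mathlib

section
/- Let Z be a comparison between interpretations I and I' that additionally satisfies the nominal condition: Z(x,x') and x = a^I imply x' = a^{I'}. Then semi-positive concepts extended with nominals {a} are preserved by Z. -/
structure Interp (CN RN IN : Type) (D : Type) where
  cI : CN → D → Prop
  rI : RN → D → D → Prop
  iI : IN → D

/-- Semi-positive concepts extended with nominals `{a}`. -/
inductive SPO (CN RN IN : Type) : Type where
  | top : SPO CN RN IN
  | bot : SPO CN RN IN
  | atom : CN → SPO CN RN IN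
  | nom : IN → SPO CN RN IN
  | or : SPO CN RN IN → SPO CN RN IN → SPO CN RN IN
  | and : SPO CN RN IN → SPO CN RN IN → SPO CN RN IN
  | ex : RN → SPO CN RN IN → SPO CN RN IN
  | all : RN → SPO CN RN IN → SPO CN RN IN

def SPO.sem {CN RN IN D : Type} (I : Interp CN RN IN D) : SPO CN RN IN → D → Prop
  | .top => fun _ => True
  | .bot => fun _ => False
  | .atom A => I.cI A
  | .nom a => fun x => x = I.iI a
  | .or C₁ C₂ => fun x => C₁.sem I x ∨ C₂.sem I x
  | .and C₁ C₂ => fun x => C₁.sem I x ∧ C₂.sem I x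
  | .ex r C => fun x => ∃ y, I.rI r x y ∧ C.sem I y
  | .all r C => fun x => ∀ y, I.rI r x y → C.sem I y

/-- A comparison extended with the nominal condition. -/
def IsComparisonNom {CN RN IN D D' : Type} (I : Interp CN RN IN D) (I' : Interp CN RN IN D')
    (Z : D → D' → Prop) : Prop :=
  (∀ A x x', Z x x' → I.cI A x → I'.cI A x') ∧
  (∀ r x x' y, Z x x' → I.rI r x y → ∃ y', Z y y' ∧ I'.rI r x' y') ∧
  (∀ r x x' y', Z x x' → I'.rI r x' y' → ∃ y, Z y y' ∧ I.rI r x y) ∧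
  (∀ (a : IN) x x', Z x x' → x = I.iI a → x' = I'.iI a)

/-- Comparisons with the nominal condition preserve semi-positive concepts
extended with nominals. -/
theorem spo_preserved {CN RN IN D D' : Type} [Nonempty D] [Nonempty D']
    (I : Interp CN RN IN D) (I' : Interp CN RN IN D') (Z : D → D' → Prop)
    (hZ : IsComparisonNom I I' Z) :
    ∀ (C : SPO CN RN IN) (x : D) (x' : D'), Z x x' → C.sem I x → C.sem I' x' := by
  
  obtain ⟨hA, hF, hB, hN⟩ := hZ
  intro C
  induction C with
  | top => intro x x' _ _; trivial
  | bot => intro x x' _ h; exact h.elim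
  | atom A => intro x x' hz h; exact hA A x x' hz h
  | nom a => intro x x' hz h; exact hN a x x' hz h
  | or C₁ C₂ ih₁ ih₂ =>
      intro x x' hz h
      cases h with
      | inl h => exact Or.inl (ih₁ x x' hz h)
      | inr h => exact Or.inr (ih₂ x x' hz h)
  | and C₁ C₂ ih₁ ih₂ =>
      intro x x' hz h
      exact ⟨ih₁ x x' hz h.1, ih₂ x x' hz h.2⟩
  | ex r C ih =>
      intro x x' hz h
      obtain ⟨y, hr, hy⟩ := h
      obtain ⟨y', hzy, hr'⟩ := hF r x x' y hz hr
      exact ⟨y', hr', ih y y' hzy hy⟩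
  | all r C ih =>
      intro x x' hz h y' hr'
      obtain ⟨y, hzy, hr⟩ := hB r x x' y' hz hr'
      exact ih y y' hzy (h y hr)
end

section
/- Hennessy–Milner theorem for comparisons: Let I and I' be finitely branching interpretations such that a^I ≤sp a^{I'} for every individual name a. Then for all x ∈ Δ^I and x' ∈ Δ^{I'}: x ≤sp x' if and only if there exists a comparison Z between I and I' with Z(x,x'). In particular, the relation {(x,x') | x ≤sp x'} is itself a comparison between I and I'. -/
inductive SP (CN RN : Type) : Type where
  | top : SP CN RN
  | bot : SP CN RN
  | atom : CN → SP CN RN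
  | or : SP CN RN → SP CN RN → SP CN RN
  | and : SP CN RN → SP CN RN → SP CN RN
  | ex : RN → SP CN RN → SP CN RN
  | all : RN → SP CN RN → SP CN RN

def SP.sem {CN RN IN D : Type} (I : Interp CN RN IN D) : SP CN RN → D → Prop
  | .top => fun _ => True
  | .bot => fun _ => False
  | .atom A => I.cI A
  | .or C₁ C₂ => fun x => C₁.sem I x ∨ C₂.sem I x
  | .and C₁ C₂ => fun x => C₁.sem I x ∧ C₂.sem I x
  | .ex r C => fun x => ∃ y, I.rI r x y ∧ C.sem I y
  | .all r C => fun x => ∀ y, I.rI r x y → C.sem I y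

def FinBranching {CN RN IN D : Type} (I : Interp CN RN IN D) : Prop :=
  ∀ (r : RN) (x : D), {y | I.rI r x y}.Finite

def LeSP {CN RN IN D D' : Type} (I : Interp CN RN IN D) (I' : Interp CN RN IN D')
    (x : D) (x' : D') : Prop :=
  ∀ C : SP CN RN, C.sem I x → C.sem I' x'

def IsComparison {CN RN IN D D' : Type} (I : Interp CN RN IN D) (I' : Interp CN RN IN D')
    (Z : D → D' → Prop) : Prop :=
  (∀ a, Z (I.iI a) (I'.iI a)) ∧
  (∀ A x x', Z x x' → I.cI A x → I'.cI A x') ∧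
  (∀ r x x' y, Z x x' → I.rI r x y → ∃ y', Z y y' ∧ I'.rI r x' y') ∧
  (∀ r x x' y', Z x x' → I'.rI r x' y' → ∃ y, Z y y' ∧ I.rI r x y)

def SP.andList {CN RN : Type} : List (SP CN RN) → SP CN RN
  | [] => .top
  | C :: l => .and C (SP.andList l)

def SP.orList {CN RN : Type} : List (SP CN RN) → SP CN RN
  | [] => .bot
  | C :: l => .or C (SP.orList l)

lemma SP.sem_andList {CN RN IN D : Type} (I : Interp CN RN IN D) (l : List (SP CN RN)) (x : D) :
    (SP.andList l).sem I x ↔ ∀ C ∈ l, C.sem I x := by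
  induction l with
  | nil => simp [SP.andList, SP.sem]
  | cons C l ih => simp [SP.andList, SP.sem, ih]

lemma SP.sem_orList {CN RN IN D : Type} (I : Interp CN RN IN D) (l : List (SP CN RN)) (x : D) :
    (SP.orList l).sem I x ↔ ∃ C ∈ l, C.sem I x := by
  induction l with
  | nil => simp [SP.orList, SP.sem]
  | cons C l ih => simp [SP.orList, SP.sem, ih]

lemma comparison_le {CN RN IN D D' : Type} (I : Interp CN RN IN D) (I' : Interp CN RN IN D')
    (Z : D → D' → Prop) (hZ : IsComparison I I' Z) :
    ∀ (C : SP CN RN) (x : D) (x' : D'), Z x x' → C.sem I x → C.sem I' x' := by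
  obtain ⟨_, hA, hforth, hback⟩ := hZ
  intro C
  induction C with
  | top => intro _ _ _ _; trivial
  | bot => intro _ _ _ h; exact h.elim
  | atom A => intro x x' hz h; exact hA A x x' hz h
  | or C₁ C₂ ih₁ ih₂ =>
    intro x x' hz h
    rcases h with h | h
    · exact Or.inl (ih₁ x x' hz h)
    · exact Or.inr (ih₂ x x' hz h)
  | and C₁ C₂ ih₁ ih₂ =>
    intro x x' hz h
    exact ⟨ih₁ x x' hz h.1, ih₂ x x' hz h.2⟩
  | ex r C ih =>
    intro x x' hz h
    obtain ⟨y, hr, hy⟩ := h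
    obtain ⟨y', hzy, hr'⟩ := hforth r x x' y hz hr
    exact ⟨y', hr', ih y y' hzy hy⟩
  | all r C ih =>
    intro x x' hz h y' hr'
    obtain ⟨y, hzy, hr⟩ := hback r x x' y' hz hr'
    exact ih y y' hzy (h y hr)

lemma lesp_comparison {CN RN IN D D' : Type}
    (I : Interp CN RN IN D) (I' : Interp CN RN IN D')
    (hfin : FinBranching I) (hfin' : FinBranching I')
    (hind : ∀ a : IN, LeSP I I' (I.iI a) (I'.iI a)) :
    IsComparison I I' (fun x x' => LeSP I I' x x') := by
  classical
  refine ⟨hind, ?_, ?_, ?_⟩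
  · intro A x x' hz h
    exact hz (.atom A) h
  · -- forth
    intro r x x' y hz hr
    by_contra hcon
    push_neg at hcon
    have key : ∀ y', I'.rI r x' y' → ∃ C : SP CN RN, C.sem I y ∧ ¬ C.sem I' y' := by
      intro y' hr'
      have hny : ¬ LeSP I I' y y' := fun h => hcon y' h hr'
      simp only [LeSP, not_forall] at hny
      obtain ⟨C, hC⟩ := hny
      exact ⟨C, by tauto⟩
    have hS := hfin' r x'
    set g : D' → SP CN RN := fun y' =>
      if h : I'.rI r x' y' then (key y' h).choose else .top with hg
    set l : List (SP CN RN) := hS.toFinset.toList.map g with hl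
    have hex : (SP.ex r (SP.andList l)).sem I x := by
      refine ⟨y, hr, ?_⟩
      rw [SP.sem_andList]
      intro C hC
      rw [hl, List.mem_map] at hC
      obtain ⟨y', hy', rfl⟩ := hC
      have hr' : I'.rI r x' y' := by
        simpa [Finset.mem_toList, Set.Finite.mem_toFinset] using hy'
      rw [hg]
      simp only [dif_pos hr']
      exact (key y' hr').choose_spec.1
    have := hz _ hex
    obtain ⟨y'', hr'', hy''⟩ := this
    rw [SP.sem_andList] at hy''
    have hmem : g y'' ∈ l := by
      rw [hl, List.mem_map]
      exact ⟨y'', by simpa [Finset.mem_toList, Set.Finite.mem_toFinset] using hr'', rfl⟩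
    have := hy'' _ hmem
    rw [hg] at this
    simp only [dif_pos hr''] at this
    exact (key y'' hr'').choose_spec.2 this
  · -- back
    intro r x x' y' hz hr'
    by_contra hcon
    push_neg at hcon
    have key : ∀ y, I.rI r x y → ∃ C : SP CN RN, C.sem I y ∧ ¬ C.sem I' y' := by
      intro y hry
      have hny : ¬ LeSP I I' y y' := fun h => hcon y h hry
      simp only [LeSP, not_forall] at hny
      obtain ⟨C, hC⟩ := hny
      exact ⟨C, by tauto⟩
    have hS := hfin r x
    set g : D → SP CN RN := fun y =>
      if h : I.rI r x y then (key y h).choose else .bot with hg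
    set l : List (SP CN RN) := hS.toFinset.toList.map g with hl
    have hall : (SP.all r (SP.orList l)).sem I x := by
      intro y hry
      rw [SP.sem_orList]
      refine ⟨g y, ?_, ?_⟩
      · rw [hl, List.mem_map]
        exact ⟨y, by simpa [Finset.mem_toList, Set.Finite.mem_toFinset] using hry, rfl⟩
      · rw [hg]
        simp only [dif_pos hry]
        exact (key y hry).choose_spec.1
    have := hz _ hall y' hr'
    rw [SP.sem_orList] at this
    obtain ⟨C, hCl, hC⟩ := this
    rw [hl, List.mem_map] at hCl
    obtain ⟨y, hy, rfl⟩ := hCl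
    have hry : I.rI r x y := by
      simpa [Finset.mem_toList, Set.Finite.mem_toFinset] using hy
    rw [hg] at hC
    simp only [dif_pos hry] at hC
    exact (key y hry).choose_spec.2 hC

/-- Hennessy–Milner theorem for comparisons: in finitely branching
interpretations with `a^I ≤sp a^{I'}` for all individual names, `x ≤sp x'`
iff some comparison relates `x` to `x'`; moreover `≤sp` itself is a
comparison. -/
theorem hm_comparison {CN RN IN D D' : Type} [Nonempty D] [Nonempty D']
    (I : Interp CN RN IN D) (I' : Interp CN RN IN D')
    (hfin : FinBranching I) (hfin' : FinBranching I')
    (hind : ∀ a : IN, LeSP I I' (I.iI a) (I'.iI a)) :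
    (∀ (x : D) (x' : D'),
      LeSP I I' x x' ↔ ∃ Z, IsComparison I I' Z ∧ Z x x') ∧
    IsComparison I I' (fun x x' => LeSP I I' x x') := by
  have hcmp := lesp_comparison I I' hfin hfin' hind
  refine ⟨?_, hcmp⟩
  intro x x'
  constructor
  · intro h
    exact ⟨_, hcmp, h⟩
  · rintro ⟨Z, hZ, hz⟩ C hC
    exact comparison_le I I' Z hZ C x x' hz hC
end

section
/- Hennessy–Milner theorem for positive concepts with seriality: Let I and I' be finitely branching interpretations with I serial (every element has at least one r-successor for every role name r), and suppose a^I ≤p a^{I'} for every individual name a, where ≤p means preservation of all positive concepts (semi-positive without ⊥). Then for all x, x': x ≤p x' iff there exists a comparison Z between I and I' with Z(x,x'). -/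
/-- Positive concepts (no ⊥). -/
inductive Pos (CN RN : Type) : Type where
  | top : Pos CN RN
  | atom : CN → Pos CN RN
  | or : Pos CN RN → Pos CN RN → Pos CN RN
  | and : Pos CN RN → Pos CN RN → Pos CN RN
  | ex : RN → Pos CN RN → Pos CN RN
  | all : RN → Pos CN RN → Pos CN RN

def Pos.sem {CN RN IN D : Type} (I : Interp CN RN IN D) : Pos CN RN → D → Prop
  | .top => fun _ => True
  | .atom A => I.cI A
  | .or C₁ C₂ => fun x => C₁.sem I x ∨ C₂.sem I x
  | .and C₁ C₂ => fun x => C₁.sem I x ∧ C₂.sem I x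
  | .ex r C => fun x => ∃ y, I.rI r x y ∧ C.sem I y
  | .all r C => fun x => ∀ y, I.rI r x y → C.sem I y

/-- `I` is serial: every element has an `r`-successor for every role name. -/
def Serial {CN RN IN D : Type} (I : Interp CN RN IN D) : Prop :=
  ∀ (x : D) (r : RN), ∃ y, I.rI r x y

/-- `x ≤p x'`: every positive concept true at `x` is true at `x'`. -/
def LeP {CN RN IN D D' : Type} (I : Interp CN RN IN D) (I' : Interp CN RN IN D')
    (x : D) (x' : D') : Prop :=
  ∀ C : Pos CN RN, C.sem I x → C.sem I' x'

def bigAnd {CN RN : Type} (l : List (Pos CN RN)) : Pos CN RN :=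
  l.foldr .and .top

lemma bigAnd_sem {CN RN IN D : Type} (I : Interp CN RN IN D) (l : List (Pos CN RN)) (x : D) :
    (bigAnd l).sem I x ↔ ∀ C ∈ l, C.sem I x := by
  induction l with
  | nil => simp [bigAnd, Pos.sem]
  | cons h t ih => simp [bigAnd, Pos.sem] at ih ⊢; tauto

def bigOr {CN RN : Type} (d : Pos CN RN) (l : List (Pos CN RN)) : Pos CN RN :=
  l.foldr .or d

lemma bigOr_sem {CN RN IN D : Type} (I : Interp CN RN IN D) (d : Pos CN RN)
    (l : List (Pos CN RN)) (x : D) :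
    (bigOr d l).sem I x ↔ d.sem I x ∨ ∃ C ∈ l, C.sem I x := by
  induction l with
  | nil => simp [bigOr]
  | cons h t ih =>
      have he : bigOr d (h :: t) = Pos.or h (bigOr d t) := rfl
      rw [he]
      simp only [Pos.sem, ih, List.mem_cons]
      constructor
      · rintro (hh | hd | ⟨C, hC, hs⟩)
        · exact Or.inr ⟨h, Or.inl rfl, hh⟩
        · exact Or.inl hd
        · exact Or.inr ⟨C, Or.inr hC, hs⟩
      · rintro (hd | ⟨C, rfl | hC, hs⟩)
        · exact Or.inr (Or.inl hd)
        · exact Or.inl hs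
        · exact Or.inr (Or.inr ⟨C, hC, hs⟩)

lemma comparison_pres {CN RN IN D D' : Type} (I : Interp CN RN IN D) (I' : Interp CN RN IN D')
    (Z : D → D' → Prop) (hZ : IsComparison I I' Z) :
    ∀ (C : Pos CN RN) (x : D) (x' : D'), Z x x' → C.sem I x → C.sem I' x' := by
  obtain ⟨_, hat, hforth, hback⟩ := hZ
  intro C
  induction C with
  | top => intro _ _ _ _; trivial
  | atom A => intro x x' hz h; exact hat A x x' hz h
  | or C₁ C₂ ih₁ ih₂ =>
      intro x x' hz h
      rcases h with h | h
      · exact Or.inl (ih₁ x x' hz h)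
      · exact Or.inr (ih₂ x x' hz h)
  | and C₁ C₂ ih₁ ih₂ =>
      intro x x' hz h
      exact ⟨ih₁ x x' hz h.1, ih₂ x x' hz h.2⟩
  | ex r C ih =>
      intro x x' hz h
      obtain ⟨y, hr, hy⟩ := h
      obtain ⟨y', hzy, hr'⟩ := hforth r x x' y hz hr
      exact ⟨y', hr', ih y y' hzy hy⟩
  | all r C ih =>
      intro x x' hz h y' hr'
      obtain ⟨y, hzy, hr⟩ := hback r x x' y' hz hr'
      exact ih y y' hzy (h y hr)

/-- Hennessy–Milner theorem for positive concepts with seriality. -/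
theorem hm_positive_serial {CN RN IN D D' : Type} [Nonempty D] [Nonempty D']
    (I : Interp CN RN IN D) (I' : Interp CN RN IN D')
    (hfin : FinBranching I) (hfin' : FinBranching I')
    (hser : Serial I)
    (hind : ∀ a : IN, LeP I I' (I.iI a) (I'.iI a)) :
    ∀ (x : D) (x' : D'),
      LeP I I' x x' ↔ ∃ Z, IsComparison I I' Z ∧ Z x x' := by

  intro x x'
  constructor
  · intro h
    refine ⟨LeP I I', ⟨hind, ?_, ?_, ?_⟩, h⟩
    · intro A u u' hz hA
      exact hz (Pos.atom A) hA
    · -- forth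
      intro r u u' y hz hr
      by_contra hcon
      push_neg at hcon
      classical
      have hSfin := hfin' r u'
      have hex : ∀ y', I'.rI r u' y' → ∃ C : Pos CN RN, C.sem I y ∧ ¬ C.sem I' y' := by
        intro y' hy'
        have := hcon y'
        by_contra hno
        push_neg at hno
        exact this hno hy'
      set f : D' → Pos CN RN := fun y' =>
        if hy : ∃ C : Pos CN RN, C.sem I y ∧ ¬ C.sem I' y' then hy.choose else Pos.top
        with hf
      have hfprop : ∀ y', I'.rI r u' y' → (f y').sem I y ∧ ¬ (f y').sem I' y' := by
        intro y' hy'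
        have he := hex y' hy'
        simp only [hf, dif_pos he]
        exact he.choose_spec
      set L := hSfin.toFinset.toList.map f with hL
      have hx : (Pos.ex r (bigAnd L)).sem I u := by
        refine ⟨y, hr, ?_⟩
        rw [bigAnd_sem]
        intro C hC
        simp only [hL, List.mem_map, Finset.mem_toList, Set.Finite.mem_toFinset,
          Set.mem_setOf_eq] at hC
        obtain ⟨y', hy', rfl⟩ := hC
        exact (hfprop y' hy').1
      have hx' := hz _ hx
      obtain ⟨y'', hr'', hsem⟩ := hx'
      rw [bigAnd_sem] at hsem
      have hmem : f y'' ∈ L := by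
        simp only [hL, List.mem_map, Finset.mem_toList, Set.Finite.mem_toFinset,
          Set.mem_setOf_eq]
        exact ⟨y'', hr'', rfl⟩
      exact (hfprop y'' hr'').2 (hsem _ hmem)
    · -- back
      intro r u u' y' hz hr'
      by_contra hcon
      push_neg at hcon
      classical
      have hSfin := hfin r u
      have hex : ∀ y, I.rI r u y → ∃ C : Pos CN RN, C.sem I y ∧ ¬ C.sem I' y' := by
        intro y hy
        have := hcon y
        by_contra hno
        push_neg at hno
        exact this hno hy
      set f : D → Pos CN RN := fun y =>
        if hy : ∃ C : Pos CN RN, C.sem I y ∧ ¬ C.sem I' y' then hy.choose else Pos.top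
        with hf
      have hfprop : ∀ y, I.rI r u y → (f y).sem I y ∧ ¬ (f y).sem I' y' := by
        intro y hy
        have he := hex y hy
        simp only [hf, dif_pos he]
        exact he.choose_spec
      obtain ⟨y₀, hy₀⟩ := hser u r
      set L := hSfin.toFinset.toList.map f with hL
      have hx : (Pos.all r (bigOr (f y₀) L)).sem I u := by
        intro y hy
        rw [bigOr_sem]
        right
        refine ⟨f y, ?_, (hfprop y hy).1⟩
        simp only [hL, List.mem_map, Finset.mem_toList, Set.Finite.mem_toFinset,
          Set.mem_setOf_eq]
        exact ⟨y, hy, rfl⟩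
      have hx' := hz _ hx y' hr'
      rw [bigOr_sem] at hx'
      rcases hx' with hx' | ⟨C, hC, hCsem⟩
      · exact (hfprop y₀ hy₀).2 hx'
      · simp only [hL, List.mem_map, Finset.mem_toList, Set.Finite.mem_toFinset,
          Set.mem_setOf_eq] at hC
        obtain ⟨y, hy, rfl⟩ := hC
        exact (hfprop y hy).2 hCsem
  · rintro ⟨Z, hZ, hxx⟩
    intro C hC
    exact comparison_pres I I' Z hZ C x x' hxx hC
end
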